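/- Fix κ ∈ (0,1]. Define g(x,y) = ((1−x)y + (1−y)x)² and G(p,x,y) = p² g(x,x) + 2p(1−p) g(x,y) + (1−p)² g(y,y). Then for every p ∈ [0,1] and every x, y with κ ≥ x ≥ y ≥ 0, there exists q ∈ [0,1] such that G(p,x,y) ≤ G(q,κ,0). -/
import Mathlib

lemma aux1 (m : ℝ) (hm0 : 0 ≤ m) (hm : m ≤ 1/2) :
    0 ≤ 1 - 2*(2 - (1-2*m)^2)*m^2 := by
  nlinarith [mul_nonneg hm0 (by linarith : (0:ℝ) ≤ 1/2 - m), sq_nonneg m,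
    mul_nonneg (mul_nonneg hm0 hm0) (by linarith : (0:ℝ) ≤ 1/2 - m)]

lemma psi (m t : ℝ) (hm0 : 0 ≤ m) (hm : m ≤ 1/2) (hmt : m ≤ t) (ht : t ≤ 1/2) :
    2*(t-m)^2 + 2*(2 - (1-2*m)^2)*t^2 ≤ 1 := by
  rcases eq_or_lt_of_le hm with h | h
  · have ht' : t = 1/2 := le_antisymm ht (by rw [← h]; exact hmt)
    rw [ht', h]; norm_num
  · have hD : (0:ℝ) ≤ 2 - (1-2*m)^2 := by nlinarith
    have h1 : (0:ℝ) ≤ (1/2-t) * (1 - 2*(2 - (1-2*m)^2)*m^2) :=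
      mul_nonneg (by linarith) (aux1 m hm0 hm)
    have h2 : (0:ℝ) ≤ (2 + 2*(2 - (1-2*m)^2)) * ((t-m) * ((1/2-t) * (1/2-m))) :=
      mul_nonneg (by linarith) (mul_nonneg (by linarith)
        (mul_nonneg (by linarith) (by linarith)))
    have key : 0 ≤ (1/2-m) * (1 - (2*(t-m)^2 + 2*(2 - (1-2*m)^2)*t^2)) := by
      nlinarith [h1, h2]
    nlinarith [key, h]

/-- key: `2 D s² t² ≤ m² (1 - 2 (s-t)²)` for `0 ≤ s ≤ m ≤ t ≤ 1/2`. -/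
lemma keylem (m s t : ℝ) (hm : m ≤ 1/2) (hs0 : 0 ≤ s) (hs : s ≤ m) (hmt : m ≤ t) (ht : t ≤ 1/2) :
    2*(2 - (1-2*m)^2)*s^2*t^2 ≤ m^2*(1-2*(s-t)^2) := by
  have hm0 : 0 ≤ m := le_trans hs0 hs
  rcases eq_or_lt_of_le hm0 with h | h
  · have hs' : s = 0 := le_antisymm (h ▸ hs) hs0
    rw [hs', ← h]; ring_nf; nlinarith [sq_nonneg t]
  · have hD : (0:ℝ) ≤ 2 - (1-2*m)^2 := by nlinarith
    have hpsi := psi m t hm0 hm hmt ht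
    have ht0 : (0:ℝ) ≤ t := le_trans hm0 hmt
    have hR0 : (0:ℝ) ≤ m^2*(1-2*t^2) := by nlinarith [sq_nonneg m, mul_nonneg (by linarith : (0:ℝ) ≤ 1/2 - t) (by linarith : (0:ℝ) ≤ 1/2 + t)]
    have hRm : (0:ℝ) ≤ m^2*(1 - (2*(t-m)^2 + 2*(2 - (1-2*m)^2)*t^2)) := by
      nlinarith [sq_nonneg m]
    have key : 0 ≤ m * (m^2*(1-2*(s-t)^2) - 2*(2 - (1-2*m)^2)*s^2*t^2) := by
      nlinarith [mul_nonneg hR0 (by linarith : (0:ℝ) ≤ m - s), mul_nonneg hRm hs0,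
        mul_nonneg (mul_nonneg (mul_nonneg h.le (by nlinarith [sq_nonneg m, sq_nonneg t, mul_nonneg hD (sq_nonneg t)] : (0:ℝ) ≤ 2*m^2 + 2*(2 - (1-2*m)^2)*t^2)) hs0) (by linarith : (0:ℝ) ≤ m - s)]
    nlinarith [key, h]

set_option maxHeartbeats 1000000 in
lemma core (m s t p : ℝ) (hm0 : 0 ≤ m) (hm : m ≤ 1/2) (hp0 : 0 ≤ p) (hp1 : p ≤ 1)
    (hs : s ≤ m) (hts : -t ≤ s) (ht : t ≤ 1/2) :
    (2 - (1-2*m)^2) * (2*(p*s^2+(1-p)*t^2)^2 - (p*s-(1-p)*t)^2) ≤ m^2 := by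
  have hD0 : (0:ℝ) ≤ 2 - (1-2*m)^2 := by nlinarith
  have hD2 : 2 - (1-2*m)^2 ≤ 2 := by nlinarith [sq_nonneg (1-2*m)]
  rcases le_or_gt s 0 with hs0 | hs0
  · -- s ≤ 0 : F ≤ 0
    have ht0 : 0 ≤ t := by linarith
    have hβ : p*s^2+(1-p)*t^2 ≤ (p*(-s)+(1-p)*t)*t := by
      nlinarith [mul_nonneg hp0 (mul_nonneg (neg_nonneg.2 hs0) (by linarith : 0 ≤ t - (-s)))]
    have hβ0 : 0 ≤ p*s^2+(1-p)*t^2 := by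
      nlinarith [mul_nonneg hp0 (sq_nonneg s), mul_nonneg (by linarith : (0:ℝ) ≤ 1-p) (sq_nonneg t)]
    have hF : 2*(p*s^2+(1-p)*t^2)^2 - (p*s-(1-p)*t)^2 ≤ 0 := by
      nlinarith [mul_le_mul hβ hβ hβ0 (mul_nonneg (by nlinarith : (0:ℝ) ≤ p*(-s)+(1-p)*t) ht0),
        sq_nonneg (p*(-s)+(1-p)*t), mul_nonneg (mul_nonneg (by nlinarith : (0:ℝ) ≤ p*(-s)+(1-p)*t) (by nlinarith : (0:ℝ) ≤ p*(-s)+(1-p)*t)) (mul_nonneg (by linarith : (0:ℝ) ≤ 1/2 - t) (by linarith : (0:ℝ) ≤ 1/2 + t))]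
    nlinarith [mul_nonneg hD0 (neg_nonneg.2 hF), sq_nonneg m]
  · rcases le_or_gt t m with htm | htm
    · -- 0 ≤ s, t ≤ m
      have hβ0 : 0 ≤ p*s^2+(1-p)*t^2 := by
        nlinarith [mul_nonneg hp0 (sq_nonneg s), mul_nonneg (by linarith : (0:ℝ) ≤ 1-p) (sq_nonneg t)]
      have hβ : p*s^2+(1-p)*t^2 ≤ m^2 := by
        nlinarith [mul_nonneg hp0 (by nlinarith : (0:ℝ) ≤ m^2 - s^2),
          mul_nonneg (by linarith : (0:ℝ) ≤ 1-p) (by nlinarith : (0:ℝ) ≤ m^2 - t^2)]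
      have h1 : (p*s^2+(1-p)*t^2)^2 ≤ m^2*m^2 := by
        nlinarith [mul_nonneg hβ0 (sub_nonneg.2 hβ), mul_nonneg (sq_nonneg m) (sub_nonneg.2 hβ)]
      have t1 : (0:ℝ) ≤ (2 - (2 - (1-2*m)^2)) * (p*s^2+(1-p)*t^2)^2 :=
        mul_nonneg (by linarith) (sq_nonneg _)
      have t2 : (0:ℝ) ≤ (2 - (1-2*m)^2) * (p*s-(1-p)*t)^2 := mul_nonneg hD0 (sq_nonneg _)
      have t3 : 4*(m^2*m^2) ≤ m^2 := by
        nlinarith [mul_nonneg (sq_nonneg m) (by nlinarith : (0:ℝ) ≤ 1 - 4*m^2)]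
      nlinarith [t1, t2, t3, h1]
    · -- 0 ≤ s ≤ m ≤ t
      have hE : (0:ℝ) < 1-2*(s-t)^2 := by nlinarith [mul_nonneg (by linarith : (0:ℝ) ≤ t - s) (by linarith : (0:ℝ) ≤ 1/2 - (t - s))]
      have hid : 2*s^2*t^2 - (1-2*(s-t)^2)*(2*(p*s^2+(1-p)*t^2)^2 - (p*s-(1-p)*t)^2)
          = ((1-2*(s-t)^2)*(s+t)*p - t*(2*t*(s-t)+1))^2 := by ring
      have hFE : (1-2*(s-t)^2)*(2*(p*s^2+(1-p)*t^2)^2 - (p*s-(1-p)*t)^2) ≤ 2*s^2*t^2 := by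
        nlinarith [sq_nonneg ((1-2*(s-t)^2)*(s+t)*p - t*(2*t*(s-t)+1))]
      have hkey := keylem m s t hm hs0.le hs htm.le ht
      have h5 : (1-2*(s-t)^2) * ((2 - (1-2*m)^2) * (2*(p*s^2+(1-p)*t^2)^2 - (p*s-(1-p)*t)^2))
          ≤ (1-2*(s-t)^2) * m^2 := by
        nlinarith [mul_le_mul_of_nonneg_left hFE hD0]
      exact le_of_mul_le_mul_left h5 hE

set_option maxHeartbeats 1000000 in
/-- The maximum of `G` on `[0,1] × {(x,y) : κ ≥ x ≥ y ≥ 0}` is attained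
on the corner `(x,y) = (κ,0)` for a suitable probability `q`. -/
theorem stmt_3 (κ : ℝ) (hκ : κ ∈ Set.Ioc (0 : ℝ) 1)
    (g : ℝ → ℝ → ℝ) (hg : ∀ x y, g x y = ((1 - x) * y + (1 - y) * x) ^ 2)
    (G : ℝ → ℝ → ℝ → ℝ)
    (hG : ∀ p x y, G p x y =
      p ^ 2 * g x x + 2 * p * (1 - p) * g x y + (1 - p) ^ 2 * g y y)
    (p x y : ℝ) (hp : p ∈ Set.Icc (0 : ℝ) 1)
    (hxκ : x ≤ κ) (hyx : y ≤ x) (hy : 0 ≤ y) :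
    ∃ q ∈ Set.Icc (0 : ℝ) 1, G p x y ≤ G q κ 0 := by
  obtain ⟨hκ0, hκ1⟩ := hκ
  obtain ⟨hp0, hp1⟩ := hp
  have hx0 : 0 ≤ x := le_trans hy hyx
  rcases le_or_gt κ (1/2) with hhalf | hhalf
  · -- κ ≤ 1/2 : take q = 1
    refine ⟨1, ⟨zero_le_one, le_refl 1⟩, ?_⟩
    rw [hG, hG, hg, hg, hg, hg, hg, hg]
    have e1 : 0 ≤ (2*κ*(1-κ) - 2*x*(1-x)) := by nlinarith [mul_nonneg (by linarith : (0:ℝ) ≤ κ - x) (by linarith : (0:ℝ) ≤ 1 - κ - x)]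
    have e2 : 0 ≤ (2*κ*(1-κ) - 2*y*(1-y)) := by nlinarith [mul_nonneg (by linarith : (0:ℝ) ≤ κ - y) (by linarith : (0:ℝ) ≤ 1 - κ - y)]
    have e3 : 0 ≤ 2*x*(1-x) - ((1-x)*y + (1-y)*x) := by nlinarith [mul_nonneg (by linarith : (0:ℝ) ≤ x - y) (by linarith : (0:ℝ) ≤ 1 - 2*x)]
    have n1 : 0 ≤ (1-x)*y + (1-y)*x := by nlinarith [mul_nonneg (by linarith : (0:ℝ) ≤ 1-x) hy, mul_nonneg (by linarith : (0:ℝ) ≤ 1-y) hx0]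
    have n2 : 0 ≤ 2*y*(1-y) := by nlinarith [mul_nonneg hy (by linarith : (0:ℝ) ≤ 1-y)]
    have n0 : 0 ≤ 2*x*(1-x) := by nlinarith [mul_nonneg hx0 (by linarith : (0:ℝ) ≤ 1-x)]
    have b1 : (2*x*(1-x))^2 ≤ (2*κ*(1-κ))^2 := by nlinarith
    have b2 : ((1-x)*y + (1-y)*x)^2 ≤ (2*κ*(1-κ))^2 := by nlinarith
    have b3 : (2*y*(1-y))^2 ≤ (2*κ*(1-κ))^2 := by nlinarith
    have q1 : 0 ≤ p^2 := sq_nonneg p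
    have q2 : 0 ≤ 2*p*(1-p) := by nlinarith [mul_nonneg hp0 (by linarith : (0:ℝ) ≤ 1-p)]
    have q3 : 0 ≤ (1-p)^2 := sq_nonneg (1-p)
    nlinarith [mul_le_mul_of_nonneg_left b1 q1, mul_le_mul_of_nonneg_left b2 q2,
      mul_le_mul_of_nonneg_left b3 q3]
  · -- κ > 1/2 : take q = 1/D with D = 2 - 4(1-κ)²
    have hD1 : (1:ℝ) < 2 - 4*(1-κ)^2 := by nlinarith [mul_nonneg (by linarith : (0:ℝ) ≤ κ - 1/2) (by linarith : (0:ℝ) ≤ 3/2 - κ)]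
    have hDpos : (0:ℝ) < 2 - 4*(1-κ)^2 := by linarith
    refine ⟨1/(2 - 4*(1-κ)^2), ⟨by positivity, ?_⟩, ?_⟩
    · rw [div_le_one hDpos]; linarith
    · have hval : G (1/(2 - 4*(1-κ)^2)) κ 0 = κ^2 / (2 - 4*(1-κ)^2) := by
        rw [hG, hg, hg, hg]; field_simp; ring
      rw [hval, hG, hg, hg, hg, le_div_iff₀ hDpos]
      have hcore := core (κ - 1/2) (x - 1/2) (1/2 - y) p (by linarith) (by linarith)
        hp0 hp1 (by linarith) (by linarith) (by linarith)
      nlinarith [hcore]
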